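/- Let X, Y and G be random variables on a common probability space taking values in finite sets, and assume G is independent of the pair (X, Y). Let Z_T = E_T(X) and Z_G = E_G(X) for arbitrary functions E_T and E_G, and let Z = f(Z_T, Z_G, G) for an arbitrary function f. Then the mutual information I(Z; Y) is bounded by the minimum of I(X; Y) and the conditional mutual information I((Z_T, Z_G); Y | G); that is, I(Z; Y) ≤ I(X; Y) and I(Z; Y) ≤ I((Z_T, Z_G); Y | G). (Theorem 1, graph-conditioned information bound, inequality (9).) -/

import Mathlib

open scoped BigOperators

section InfoTheory

variable {Ω : Type*} [Fintype Ω]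

open Classical in
/-- The probability mass function of the random variable `f` under the weight `w`
(a probability measure on the finite sample space `Ω`). -/
noncomputable def pmfOf {α : Type*} [Fintype α] (w : Ω → ℝ) (f : Ω → α) (a : α) : ℝ :=
  ∑ ω, if f ω = a then w ω else 0

/-- Shannon entropy of a finite-valued random variable (with the convention `0 log 0 = 0`,
which holds automatically since `Real.log 0 = 0`). -/
noncomputable def entropy {α : Type*} [Fintype α] (w : Ω → ℝ) (f : Ω → α) : ℝ :=
  -∑ a, pmfOf w f a * Real.log (pmfOf w f a)

/-- Mutual information `I(f; g) = H(f) + H(g) - H(f, g)`. -/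
noncomputable def mutualInfo {α β : Type*} [Fintype α] [Fintype β]
    (w : Ω → ℝ) (f : Ω → α) (g : Ω → β) : ℝ :=
  entropy w f + entropy w g - entropy w (fun ω => (f ω, g ω))

/-- Conditional mutual information
`I(f; g | h) = H(f, h) + H(g, h) - H(f, g, h) - H(h)`. -/
noncomputable def condMutualInfo {α β γ : Type*} [Fintype α] [Fintype β] [Fintype γ]
    (w : Ω → ℝ) (f : Ω → α) (g : Ω → β) (h : Ω → γ) : ℝ :=
  entropy w (fun ω => (f ω, h ω)) + entropy w (fun ω => (g ω, h ω))
    - entropy w (fun ω => (f ω, g ω, h ω)) - entropy w h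

/-- Independence of two finite-valued random variables: the joint law is
the product of the marginal laws. -/
def IndepRV {α β : Type*} [Fintype α] [Fintype β]
    (w : Ω → ℝ) (f : Ω → α) (g : Ω → β) : Prop :=
  ∀ a b, pmfOf w (fun ω => (f ω, g ω)) (a, b) = pmfOf w f a * pmfOf w g b

end InfoTheory

section AuxInfoTheory

variable {Ω : Type*} [Fintype Ω]

open Classical

set_option linter.unusedSectionVars false

variable {α β γ : Type*} [Fintype α] [Fintype β] [Fintype γ]

theorem pmf_nonneg (w : Ω → ℝ) (hw0 : ∀ ω, 0 ≤ w ω) (f : Ω → α) (a : α) :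
    0 ≤ pmfOf w f a := by
  apply Finset.sum_nonneg
  intro ω _
  split_ifs <;> simp [hw0 ω]

theorem pmf_sum (w : Ω → ℝ) (f : Ω → α) : ∑ a, pmfOf w f a = ∑ ω, w ω := by
  unfold pmfOf
  rw [Finset.sum_comm]
  apply Finset.sum_congr rfl
  intro ω _
  simp

theorem pmf_comp (w : Ω → ℝ) (f : Ω → α) (φ : α → β) (b : β) :
    pmfOf w (fun ω => φ (f ω)) b = ∑ a, if φ a = b then pmfOf w f a else 0 := by
  unfold pmfOf
  have h : ∀ a : α, (if φ a = b then ∑ ω, if f ω = a then w ω else 0 else 0)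
      = ∑ ω, if f ω = a then (if φ a = b then w ω else 0) else 0 := by
    intro a
    split_ifs with h <;> simp [h]
  rw [Finset.sum_congr rfl (fun a _ => h a), Finset.sum_comm]
  apply Finset.sum_congr rfl
  intro ω _
  rw [Finset.sum_eq_single (f ω)]
  · simp
  · intro a _ ha; simp [Ne.symm ha]
  · simp

theorem pmf_comp_apply (w : Ω → ℝ) (f : Ω → α) (φ : α → β) (hφ : Function.Injective φ)
    (a : α) : pmfOf w (fun ω => φ (f ω)) (φ a) = pmfOf w f a := by
  unfold pmfOf
  apply Finset.sum_congr rfl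
  intro ω _
  simp [hφ.eq_iff]

theorem pmf_comp_zero (w : Ω → ℝ) (f : Ω → α) (φ : α → β) (b : β)
    (hb : ∀ a, φ a ≠ b) : pmfOf w (fun ω => φ (f ω)) b = 0 := by
  unfold pmfOf
  apply Finset.sum_eq_zero
  intro ω _
  simp [hb (f ω)]

theorem entropy_comp_inj (w : Ω → ℝ) (f : Ω → α) (φ : α → β)
    (hφ : Function.Injective φ) :
    entropy w (fun ω => φ (f ω)) = entropy w f := by
  unfold entropy
  congr 1
  calc ∑ b : β, pmfOf w (fun ω => φ (f ω)) b * Real.log (pmfOf w (fun ω => φ (f ω)) b)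
      = ∑ b ∈ Finset.univ.image φ,
          pmfOf w (fun ω => φ (f ω)) b * Real.log (pmfOf w (fun ω => φ (f ω)) b) := by
        refine (Finset.sum_subset (Finset.subset_univ _) ?_).symm
        intro b _ hb
        simp only [Finset.mem_image] at hb
        rw [pmf_comp_zero w f φ b (fun a h => hb ⟨a, Finset.mem_univ a, h⟩)]
        simp
    _ = ∑ a : α, pmfOf w (fun ω => φ (f ω)) (φ a) * Real.log (pmfOf w (fun ω => φ (f ω)) (φ a)) :=
        Finset.sum_image (fun x _ y _ h => hφ h)
    _ = ∑ a : α, pmfOf w f a * Real.log (pmfOf w f a) := by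
        apply Finset.sum_congr rfl
        intro a _
        rw [pmf_comp_apply w f φ hφ a]

theorem pmf_marg_fst (w : Ω → ℝ) (A : Ω → α) (B : Ω → β) (a : α) :
    ∑ b, pmfOf w (fun ω => (A ω, B ω)) (a, b) = pmfOf w A a := by
  unfold pmfOf
  rw [Finset.sum_comm]
  apply Finset.sum_congr rfl
  intro ω _
  simp [Prod.ext_iff, ite_and]

theorem pmf_marg_snd (w : Ω → ℝ) (A : Ω → α) (B : Ω → β) (b : β) :
    ∑ a, pmfOf w (fun ω => (A ω, B ω)) (a, b) = pmfOf w B b := by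
  unfold pmfOf
  rw [Finset.sum_comm]
  apply Finset.sum_congr rfl
  intro ω _
  simp [Prod.ext_iff, ite_and]

theorem pmf_marg_mid (w : Ω → ℝ) (A : Ω → α) (B : Ω → β) (C : Ω → γ) (a : α) (c : γ) :
    ∑ b, pmfOf w (fun ω => (A ω, B ω, C ω)) (a, b, c)
      = pmfOf w (fun ω => (A ω, C ω)) (a, c) := by
  unfold pmfOf
  rw [Finset.sum_comm]
  apply Finset.sum_congr rfl
  intro ω _
  simp [Prod.ext_iff, ite_and]

theorem indep_symm {w : Ω → ℝ} {f : Ω → α} {g : Ω → β} (h : IndepRV w f g) :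
    IndepRV w g f := by
  intro b a
  have : pmfOf w (fun ω => (g ω, f ω)) (b, a) = pmfOf w (fun ω => (f ω, g ω)) (a, b) := by
    unfold pmfOf
    apply Finset.sum_congr rfl
    intro ω _
    simp [Prod.ext_iff, and_comm]
  rw [this, h a b, mul_comm]

theorem indep_comp_right {γ' : Type*} [Fintype γ'] {w : Ω → ℝ} {f : Ω → α} {g : Ω → γ'}
    (h : IndepRV w f g) (ψ : γ' → β) : IndepRV w f (fun ω => ψ (g ω)) := by
  intro a b
  have h1 : pmfOf w (fun ω => (f ω, ψ (g ω))) (a, b)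
      = pmfOf w (fun ω => (fun p : α × γ' => (p.1, ψ p.2)) ((fun ω => (f ω, g ω)) ω)) (a, b) := rfl
  rw [h1, pmf_comp w (fun ω => (f ω, g ω)) (fun p : α × γ' => (p.1, ψ p.2)) (a, b),
    pmf_comp w g ψ b, Fintype.sum_prod_type]
  have h' : ∀ x y, pmfOf w (fun ω => (f ω, g ω)) (x, y) = pmfOf w f x * pmfOf w g y := h
  simp only [h', Prod.ext_iff, ite_and, Finset.mul_sum]
  rw [Finset.sum_eq_single a]
  · apply Finset.sum_congr rfl; intro c _; split_ifs <;> simp_all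
  · intro a' _ ha'; simp [ha']
  · simp
theorem entropy_pair_of_indep (w : Ω → ℝ) (hw0 : ∀ ω, 0 ≤ w ω) (hw1 : ∑ ω, w ω = 1)
    (f : Ω → α) (g : Ω → β) (h : IndepRV w f g) :
    entropy w (fun ω => (f ω, g ω)) = entropy w f + entropy w g := by
  have h' : ∀ x y, pmfOf w (fun ω => (f ω, g ω)) (x, y) = pmfOf w f x * pmfOf w g y := h
  have key : ∀ x y : ℝ, 0 ≤ x → 0 ≤ y →
      x * y * Real.log (x * y) = (x * Real.log x) * y + x * (y * Real.log y) := by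
    intro x y hx hy
    rcases eq_or_lt_of_le hx with hx0 | hx0
    · simp [← hx0]
    rcases eq_or_lt_of_le hy with hy0 | hy0
    · simp [← hy0]
    rw [Real.log_mul (ne_of_gt hx0) (ne_of_gt hy0)]
    ring
  unfold entropy
  rw [Fintype.sum_prod_type]
  have : ∀ x, ∑ y, pmfOf w (fun ω => (f ω, g ω)) (x, y) *
      Real.log (pmfOf w (fun ω => (f ω, g ω)) (x, y))
      = ∑ y, ((pmfOf w f x * Real.log (pmfOf w f x)) * pmfOf w g y
          + pmfOf w f x * (pmfOf w g y * Real.log (pmfOf w g y))) := by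
    intro x
    apply Finset.sum_congr rfl
    intro y _
    rw [h' x y, key _ _ (pmf_nonneg w hw0 f x) (pmf_nonneg w hw0 g y)]
  rw [Finset.sum_congr rfl (fun x _ => this x)]
  have expand : ∑ x, ∑ y, ((pmfOf w f x * Real.log (pmfOf w f x)) * pmfOf w g y
      + pmfOf w f x * (pmfOf w g y * Real.log (pmfOf w g y)))
      = (∑ x, pmfOf w f x * Real.log (pmfOf w f x)) * (∑ y, pmfOf w g y)
        + (∑ x, pmfOf w f x) * (∑ y, pmfOf w g y * Real.log (pmfOf w g y)) := by
    rw [Finset.sum_mul_sum, Finset.sum_mul_sum, ← Finset.sum_add_distrib]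
    apply Finset.sum_congr rfl
    intro x _
    rw [← Finset.sum_add_distrib]
  rw [expand, pmf_sum w f, pmf_sum w g, hw1]
  ring

theorem entropy_swap (w : Ω → ℝ) (A : Ω → α) (B : Ω → β) :
    entropy w (fun ω => (A ω, B ω)) = entropy w (fun ω => (B ω, A ω)) := by
  have : Function.Injective (fun p : β × α => (p.2, p.1)) := by
    intro ⟨a, b⟩ ⟨c, d⟩ h
    simpa [Prod.ext_iff, and_comm] using h
  have h2 := (entropy_comp_inj w (fun ω => (B ω, A ω)) (fun p : β × α => (p.2, p.1)) this).symm
  simpa using h2.symm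

theorem entropy_reassoc (w : Ω → ℝ) (A : Ω → α) (Y : Ω → β) (G : Ω → γ) :
    entropy w (fun ω => ((A ω, G ω), Y ω)) = entropy w (fun ω => (A ω, Y ω, G ω)) := by
  have : Function.Injective (fun p : α × β × γ => ((p.1, p.2.2), p.2.1)) := by
    intro ⟨a, b, c⟩ ⟨a', b', c'⟩ h
    simp_all [Prod.ext_iff]
  have h2 := entropy_comp_inj w (fun ω => (A ω, Y ω, G ω)) (fun p : α × β × γ => ((p.1, p.2.2), p.2.1)) this
  simpa using h2

theorem chain_rule (w : Ω → ℝ) (A : Ω → α) (Y : Ω → β) (G : Ω → γ) :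
    mutualInfo w (fun ω => (A ω, G ω)) Y = mutualInfo w G Y + condMutualInfo w A Y G := by
  unfold mutualInfo condMutualInfo
  rw [entropy_reassoc w A Y G, entropy_swap w Y G]
  ring
theorem condMI_key {q pac pbc pc : ℝ} (hq : 0 ≤ q) (h1 : q ≤ pac) (h2 : q ≤ pbc) (h3 : q ≤ pc) :
    q * (Real.log pac + Real.log pbc - Real.log q - Real.log pc) ≤ pac * pbc / pc - q := by
  rcases eq_or_lt_of_le hq with hq0 | hq0
  · rw [← hq0]
    have hpac : (0:ℝ) ≤ pac := hq0 ▸ h1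
    have hpbc : (0:ℝ) ≤ pbc := hq0 ▸ h2
    have hpc : (0:ℝ) ≤ pc := hq0 ▸ h3
    simp only [zero_mul, sub_zero]
    positivity
  · have hpac : 0 < pac := lt_of_lt_of_le hq0 h1
    have hpbc : 0 < pbc := lt_of_lt_of_le hq0 h2
    have hpc : 0 < pc := lt_of_lt_of_le hq0 h3
    have hlog : Real.log pac + Real.log pbc - Real.log q - Real.log pc
        = Real.log (pac * pbc / (q * pc)) := by
      rw [Real.log_div (by positivity) (by positivity), Real.log_mul (ne_of_gt hpac)
        (ne_of_gt hpbc), Real.log_mul (ne_of_gt hq0) (ne_of_gt hpc)]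
      ring
    rw [hlog]
    have hr : 0 < pac * pbc / (q * pc) := by positivity
    have hle := Real.log_le_sub_one_of_pos hr
    calc q * Real.log (pac * pbc / (q * pc))
        ≤ q * (pac * pbc / (q * pc) - 1) := by
          exact mul_le_mul_of_nonneg_left hle hq
      _ = pac * pbc / pc - q := by
          field_simp
theorem condMutualInfo_nonneg (w : Ω → ℝ) (hw0 : ∀ ω, 0 ≤ w ω) (hw1 : ∑ ω, w ω = 1)
    (A : Ω → α) (B : Ω → β) (C : Ω → γ) : 0 ≤ condMutualInfo w A B C := by
  set q : α → β → γ → ℝ := fun a b c => pmfOf w (fun ω => (A ω, B ω, C ω)) (a, b, c) with hqdef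
  set pac : α → γ → ℝ := fun a c => pmfOf w (fun ω => (A ω, C ω)) (a, c) with hpacdef
  set pbc : β → γ → ℝ := fun b c => pmfOf w (fun ω => (B ω, C ω)) (b, c) with hpbcdef
  set pc : γ → ℝ := fun c => pmfOf w C c with hpcdef
  have hq0 : ∀ a b c, 0 ≤ q a b c := fun a b c => pmf_nonneg w hw0 _ _
  have hpac0 : ∀ a c, 0 ≤ pac a c := fun a c => pmf_nonneg w hw0 _ _
  have hpbc0 : ∀ b c, 0 ≤ pbc b c := fun b c => pmf_nonneg w hw0 _ _
  have mAC : ∀ a c, ∑ b, q a b c = pac a c := fun a c => pmf_marg_mid w A B C a c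
  have mBC : ∀ b c, ∑ a, q a b c = pbc b c := fun b c =>
    pmf_marg_snd w A (fun ω => (B ω, C ω)) (b, c)
  have mC1 : ∀ c, ∑ a, pac a c = pc c := fun c => pmf_marg_snd w A C c
  have mC2 : ∀ c, ∑ b, pbc b c = pc c := fun c => pmf_marg_snd w B C c
  have hqle_pac : ∀ a b c, q a b c ≤ pac a c := by
    intro a b c
    rw [← mAC a c]
    exact Finset.single_le_sum (fun b' _ => hq0 a b' c) (Finset.mem_univ b)
  have hqle_pbc : ∀ a b c, q a b c ≤ pbc b c := by
    intro a b c
    rw [← mBC b c]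
    exact Finset.single_le_sum (fun a' _ => hq0 a' b c) (Finset.mem_univ a)
  have hpacle : ∀ a c, pac a c ≤ pc c := by
    intro a c
    rw [← mC1 c]
    exact Finset.single_le_sum (fun a' _ => hpac0 a' c) (Finset.mem_univ a)
  have hqle_pc : ∀ a b c, q a b c ≤ pc c := fun a b c =>
    le_trans (hqle_pac a b c) (hpacle a c)
  -- entropy expansions
  have EABC : entropy w (fun ω => (A ω, B ω, C ω))
      = -∑ a, ∑ b, ∑ c, q a b c * Real.log (q a b c) := by
    unfold entropy
    congr 1
    rw [Fintype.sum_prod_type]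
    apply Finset.sum_congr rfl; intro a _
    rw [Fintype.sum_prod_type]
  have EC : entropy w C = -∑ a, ∑ b, ∑ c, q a b c * Real.log (pc c) := by
    unfold entropy
    congr 1
    calc ∑ c, pc c * Real.log (pc c)
        = ∑ c, ∑ a, ∑ b, q a b c * Real.log (pc c) := by
          apply Finset.sum_congr rfl; intro c _
          have hpc : pc c = ∑ a, ∑ b, q a b c := by
            rw [← mC1 c]
            exact Finset.sum_congr rfl fun a _ => (mAC a c).symm
          rw [hpc, Finset.sum_mul]
          apply Finset.sum_congr rfl; intro a _
          rw [Finset.sum_mul]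
      _ = ∑ a, ∑ c, ∑ b, q a b c * Real.log (pc c) := Finset.sum_comm
      _ = ∑ a, ∑ b, ∑ c, q a b c * Real.log (pc c) :=
          Finset.sum_congr rfl fun a _ => Finset.sum_comm
  have EAC : entropy w (fun ω => (A ω, C ω))
      = -∑ a, ∑ b, ∑ c, q a b c * Real.log (pac a c) := by
    unfold entropy
    congr 1
    rw [Fintype.sum_prod_type]
    apply Finset.sum_congr rfl; intro a _
    calc ∑ c, pac a c * Real.log (pac a c)
        = ∑ c, ∑ b, q a b c * Real.log (pac a c) := by
          apply Finset.sum_congr rfl; intro c _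
          rw [← Finset.sum_mul, mAC]
      _ = ∑ b, ∑ c, q a b c * Real.log (pac a c) := Finset.sum_comm
  have EBC : entropy w (fun ω => (B ω, C ω))
      = -∑ a, ∑ b, ∑ c, q a b c * Real.log (pbc b c) := by
    unfold entropy
    congr 1
    rw [Fintype.sum_prod_type]
    calc ∑ b, ∑ c, pbc b c * Real.log (pbc b c)
        = ∑ b, ∑ c, ∑ a, q a b c * Real.log (pbc b c) := by
          apply Finset.sum_congr rfl; intro b _
          apply Finset.sum_congr rfl; intro c _
          rw [← Finset.sum_mul, mBC]
      _ = ∑ b, ∑ a, ∑ c, q a b c * Real.log (pbc b c) :=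
          Finset.sum_congr rfl fun b _ => Finset.sum_comm
      _ = ∑ a, ∑ b, ∑ c, q a b c * Real.log (pbc b c) := Finset.sum_comm
  -- combine
  have hform : condMutualInfo w A B C
      = (∑ a, ∑ b, ∑ c, q a b c * Real.log (q a b c))
        + (∑ a, ∑ b, ∑ c, q a b c * Real.log (pc c))
        - (∑ a, ∑ b, ∑ c, q a b c * Real.log (pac a c))
        - (∑ a, ∑ b, ∑ c, q a b c * Real.log (pbc b c)) := by
    unfold condMutualInfo
    rw [EABC, EC, EAC, EBC]
    ring
  rw [hform]
  have hU : (∑ a, ∑ b, ∑ c, q a b c * Real.log (pac a c))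
      + (∑ a, ∑ b, ∑ c, q a b c * Real.log (pbc b c))
      - (∑ a, ∑ b, ∑ c, q a b c * Real.log (q a b c))
      - (∑ a, ∑ b, ∑ c, q a b c * Real.log (pc c))
      = ∑ a, ∑ b, ∑ c, q a b c * (Real.log (pac a c) + Real.log (pbc b c)
          - Real.log (q a b c) - Real.log (pc c)) := by
    simp only [← Finset.sum_add_distrib, ← Finset.sum_sub_distrib]
    apply Finset.sum_congr rfl; intro a _
    apply Finset.sum_congr rfl; intro b _
    apply Finset.sum_congr rfl; intro c _
    ring
  have hsumq : ∑ a, ∑ b, ∑ c, q a b c = 1 := by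
    have h2 := pmf_sum w (fun ω => (A ω, B ω, C ω))
    rw [hw1] at h2
    simp only [Fintype.sum_prod_type] at h2
    exact h2
  have hbound : ∑ a, ∑ b, ∑ c, q a b c * (Real.log (pac a c) + Real.log (pbc b c)
      - Real.log (q a b c) - Real.log (pc c))
      ≤ (∑ a, ∑ b, ∑ c, pac a c * pbc b c / pc c) - 1 := by
    calc ∑ a, ∑ b, ∑ c, q a b c * (Real.log (pac a c) + Real.log (pbc b c)
          - Real.log (q a b c) - Real.log (pc c))
        ≤ ∑ a, ∑ b, ∑ c, (pac a c * pbc b c / pc c - q a b c) := by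
          apply Finset.sum_le_sum; intro a _
          apply Finset.sum_le_sum; intro b _
          apply Finset.sum_le_sum; intro c _
          exact condMI_key (hq0 a b c) (hqle_pac a b c) (hqle_pbc a b c) (hqle_pc a b c)
      _ = (∑ a, ∑ b, ∑ c, pac a c * pbc b c / pc c) - ∑ a, ∑ b, ∑ c, q a b c := by
          simp only [Finset.sum_sub_distrib]
      _ = (∑ a, ∑ b, ∑ c, pac a c * pbc b c / pc c) - 1 := by rw [hsumq]
  have hV : (∑ a, ∑ b, ∑ c, pac a c * pbc b c / pc c) ≤ 1 := by
    have reord : (∑ a, ∑ b, ∑ c, pac a c * pbc b c / pc c)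
        = ∑ c, ∑ a, ∑ b, pac a c * pbc b c / pc c :=
      calc ∑ a, ∑ b, ∑ c, pac a c * pbc b c / pc c
          = ∑ a, ∑ c, ∑ b, pac a c * pbc b c / pc c :=
            Finset.sum_congr rfl fun a _ => Finset.sum_comm
        _ = ∑ c, ∑ a, ∑ b, pac a c * pbc b c / pc c := Finset.sum_comm
    rw [reord]
    have per_c : ∀ c, ∑ a, ∑ b, pac a c * pbc b c / pc c ≤ pc c := by
      intro c
      by_cases h : pc c = 0
      · have hz : ∀ a, pac a c = 0 := by
          intro a
          have hsum := mC1 c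
          rw [h] at hsum
          exact le_antisymm (hsum ▸ Finset.single_le_sum (fun a' _ => hpac0 a' c)
            (Finset.mem_univ a)) (hpac0 a c)
        rw [h]
        apply le_of_eq
        apply Finset.sum_eq_zero; intro a _
        apply Finset.sum_eq_zero; intro b _
        rw [hz a]
        simp
      · have inner : ∀ a, ∑ b, pac a c * pbc b c / pc c = pac a c := by
          intro a
          rw [← Finset.sum_div, ← Finset.mul_sum, mC2, mul_div_assoc, div_self h, mul_one]
        rw [Finset.sum_congr rfl fun a _ => inner a, mC1]
    calc ∑ c, ∑ a, ∑ b, pac a c * pbc b c / pc c ≤ ∑ c, pc c :=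
          Finset.sum_le_sum fun c _ => per_c c
      _ = 1 := by rw [hpcdef]; rw [pmf_sum w C, hw1]
  linarith [hU, hbound, hV]
theorem zero_mi (w : Ω → ℝ) (hw0 : ∀ ω, 0 ≤ w ω) (hw1 : ∑ ω, w ω = 1)
    (f : Ω → α) (g : Ω → β) (h : IndepRV w f g) : mutualInfo w f g = 0 := by
  unfold mutualInfo
  rw [entropy_pair_of_indep w hw0 hw1 f g h]
  ring

theorem dpi (w : Ω → ℝ) (hw0 : ∀ ω, 0 ≤ w ω) (hw1 : ∑ ω, w ω = 1)
    (W : Ω → α) (Y : Ω → β) (φ : α → γ) :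
    mutualInfo w (fun ω => φ (W ω)) Y ≤ mutualInfo w W Y := by
  have hψ : Function.Injective (fun a : α => (a, φ a)) := fun a b h => (Prod.ext_iff.1 h).1
  have hW : entropy w W = entropy w (fun ω => (W ω, φ (W ω))) :=
    (entropy_comp_inj w W (fun a => (a, φ a)) hψ).symm
  have hψ2 : Function.Injective (fun p : α × β => ((p.1, φ p.1), p.2)) := by
    intro ⟨a, b⟩ ⟨a', b'⟩ h
    simp_all [Prod.ext_iff]
  have hWY : entropy w (fun ω => (W ω, Y ω)) = entropy w (fun ω => ((W ω, φ (W ω)), Y ω)) := by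
    have h2 := entropy_comp_inj w (fun ω => (W ω, Y ω))
      (fun p : α × β => ((p.1, φ p.1), p.2)) hψ2
    simpa using h2.symm
  have hpair : mutualInfo w W Y = mutualInfo w (fun ω => (W ω, φ (W ω))) Y := by
    unfold mutualInfo
    rw [← hW, ← hWY]
  have hchain := chain_rule w W Y (fun ω => φ (W ω))
  have hcmi := condMutualInfo_nonneg w hw0 hw1 W Y (fun ω => φ (W ω))
  linarith [hpair, hchain, hcmi]

end AuxInfoTheory


/-- **Theorem 1 (graph-conditioned information bound, inequality (9)).**
If `G` is independent of the pair `(X, Y)`, `Z_T = E_T(X)`, `Z_G = E_G(X)` and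
`Z = f(Z_T, Z_G, G)`, then `I(Z; Y) ≤ I(X; Y)` and
`I(Z; Y) ≤ I((Z_T, Z_G); Y | G)`. -/
theorem graph_conditioned_information_bound
    {Ω 𝒳 𝒴 𝒢 T U V : Type*} [Fintype Ω] [Fintype 𝒳] [Fintype 𝒴] [Fintype 𝒢]
    [Fintype T] [Fintype U] [Fintype V]
    (w : Ω → ℝ) (hw0 : ∀ ω, 0 ≤ w ω) (hw1 : ∑ ω, w ω = 1)
    (X : Ω → 𝒳) (Y : Ω → 𝒴) (G : Ω → 𝒢)
    (hGindep : IndepRV w G (fun ω => (X ω, Y ω)))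
    (E_T : 𝒳 → T) (E_G : 𝒳 → U) (f : T × U × 𝒢 → V) :
    mutualInfo w (fun ω => f (E_T (X ω), E_G (X ω), G ω)) Y ≤ mutualInfo w X Y ∧
    mutualInfo w (fun ω => f (E_T (X ω), E_G (X ω), G ω)) Y ≤
      condMutualInfo w (fun ω => (E_T (X ω), E_G (X ω))) Y G := by
  have hGY : IndepRV w G Y := indep_comp_right hGindep Prod.snd
  have hmiGY : mutualInfo w G Y = 0 := zero_mi w hw0 hw1 G Y hGY
  constructor
  · have hdpi := dpi w hw0 hw1 (fun ω => (X ω, G ω)) Y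
      (fun p : 𝒳 × 𝒢 => f (E_T p.1, E_G p.1, p.2))
    have hchain := chain_rule w X Y G
    have hGX : IndepRV w G X := indep_comp_right hGindep Prod.fst
    have hXG : IndepRV w X G := indep_symm hGX
    have hYG : IndepRV w Y G := indep_symm hGY
    have hXYG : IndepRV w (fun ω => (X ω, Y ω)) G := indep_symm hGindep
    have e1 : entropy w (fun ω => (X ω, G ω)) = entropy w X + entropy w G :=
      entropy_pair_of_indep w hw0 hw1 X G hXG
    have e2 : entropy w (fun ω => (Y ω, G ω)) = entropy w Y + entropy w G :=
      entropy_pair_of_indep w hw0 hw1 Y G hYG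
    have hinj : Function.Injective (fun p : (𝒳 × 𝒴) × 𝒢 => (p.1.1, p.1.2, p.2)) := by
      intro ⟨⟨a, b⟩, c⟩ ⟨⟨a', b'⟩, c'⟩ h
      simp_all [Prod.ext_iff]
    have e3 : entropy w (fun ω => (X ω, Y ω, G ω))
        = entropy w (fun ω => (X ω, Y ω)) + entropy w G := by
      have h2 := entropy_comp_inj w (fun ω => ((X ω, Y ω), G ω))
        (fun p : (𝒳 × 𝒴) × 𝒢 => (p.1.1, p.1.2, p.2)) hinj
      have h3 : entropy w (fun ω => (X ω, Y ω, G ω))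
          = entropy w (fun ω => ((X ω, Y ω), G ω)) := by simpa using h2
      rw [h3, entropy_pair_of_indep w hw0 hw1 (fun ω => (X ω, Y ω)) G hXYG]
    have hcmi_eq : condMutualInfo w X Y G = mutualInfo w X Y := by
      unfold condMutualInfo mutualInfo
      rw [e1, e2, e3]
      ring
    have hz : mutualInfo w (fun ω => f (E_T (X ω), E_G (X ω), G ω)) Y
        ≤ mutualInfo w (fun ω => (X ω, G ω)) Y := by simpa using hdpi
    linarith [hz, hchain, hmiGY, hcmi_eq]
  · have hdpi := dpi w hw0 hw1 (fun ω => ((E_T (X ω), E_G (X ω)), G ω)) Y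
      (fun p : (T × U) × 𝒢 => f (p.1.1, p.1.2, p.2))
    have hz : mutualInfo w (fun ω => f (E_T (X ω), E_G (X ω), G ω)) Y
        ≤ mutualInfo w (fun ω => ((E_T (X ω), E_G (X ω)), G ω)) Y := by simpa using hdpi
    have hchain := chain_rule w (fun ω => (E_T (X ω), E_G (X ω))) Y G
    linarith [hz, hchain, hmiGY]
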